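/- For n = 3: the algebra B_3^(2) is 5-dimensional over K, with basis the images of 1, r_{12}^3, r_{13}^2, r_{23}^1, and r_{12}^3 r_{23}^1; the induced differential d_B satisfies d_B(r_{12}^3) = 0, d_B(r_{23}^1) = 0, d_B(r_{13}^2) = r_{12}^3 r_{23}^1, and d_B(r_{12}^3 r_{23}^1) = 0; the kernel of d_B is the 4-dimensional span of the images of 1, r_{12}^3, r_{23}^1, r_{12}^3 r_{23}^1, and the range of d_B is the 1-dimensional span of the image of r_{12}^3 r_{23}^1. Consequently the homology of (B_3^(2), d_B) has dimension 1 in degree 0, dimension 2 in degree 1, and dimension 0 in degree 2. -/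

import Mathlib

/-!
Statement 10: explicit description of `B_3^(2)`, its differential `d_B`, and the
dimensions of its homology.
-/

noncomputable section

/-- Index type for the generators `r_{ij}^m` of `B_n^(2)`:
`1 ≤ i < j ≤ n`, `m ∈ {1,…,n} ∖ {i,j}`.  An element is `(i, j, m)`. -/
abbrev B2Idx (n : ℕ) : Type :=
  {x : ℕ × ℕ × ℕ //
    x.1 ∈ Finset.Icc 1 n ∧ x.2.1 ∈ Finset.Icc 1 n ∧ x.2.2 ∈ Finset.Icc 1 n ∧
    x.1 < x.2.1 ∧ x.2.2 ≠ x.1 ∧ x.2.2 ≠ x.2.1}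

variable (K : Type) [Field K] (n : ℕ)

/-- The generating set of the ideal `I_n`. -/
def b2Rels : Set (FreeAlgebra K (B2Idx n)) :=
  {x | ∃ g1 g2 : B2Idx n,
      ¬(g2.1.1 = g1.1.2.1 ∧ (g2.1.2.2 = g1.1.2.2 ∨ g2.1.2.2 = g1.1.1)) ∧
      x = FreeAlgebra.ι K g1 * FreeAlgebra.ι K g2}

/-- The relation presenting `B_n^(2)` as a `RingQuot`. -/
def b2Rel : FreeAlgebra K (B2Idx n) → FreeAlgebra K (B2Idx n) → Prop :=
  fun a b => a ∈ b2Rels K n ∧ b = 0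

/-- The monomial algebra `B_n^(2) = F/I_n`. -/
abbrev B2Alg := RingQuot (b2Rel K n)

/-- The quotient map `F → B_n^(2)`. -/
def mkB : FreeAlgebra K (B2Idx n) →ₐ[K] B2Alg K n := RingQuot.mkAlgHom K (b2Rel K n)

/-- `δ(r_{ij}^m) = -Σ_{l=i+1, l≠m}^{j-1} (r_{il}^m r_{lj}^m + r_{il}^m r_{lj}^i)`, plus,
if `i < m < j`, the additional summand `Σ_{l ∈ {1,…,n} ∖ {i,m}} r_{im}^l r_{mj}^i`. -/
def delta (g : B2Idx n) : FreeAlgebra K (B2Idx n) :=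
  -(∑ l ∈ ((Finset.Ioo g.1.1 g.1.2.1).erase g.1.2.2).attach,
      (FreeAlgebra.ι K (⟨(g.1.1, l.1, g.1.2.2), by
          have h1 := g.2; have h2 := l.2; dsimp only
          simp only [Finset.mem_erase, Finset.mem_Ioo, Finset.mem_Icc] at h1 h2 ⊢
          omega⟩ : B2Idx n) *
        FreeAlgebra.ι K (⟨(l.1, g.1.2.1, g.1.2.2), by
          have h1 := g.2; have h2 := l.2; dsimp only
          simp only [Finset.mem_erase, Finset.mem_Ioo, Finset.mem_Icc] at h1 h2 ⊢
          omega⟩ : B2Idx n) +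
       FreeAlgebra.ι K (⟨(g.1.1, l.1, g.1.2.2), by
          have h1 := g.2; have h2 := l.2; dsimp only
          simp only [Finset.mem_erase, Finset.mem_Ioo, Finset.mem_Icc] at h1 h2 ⊢
          omega⟩ : B2Idx n) *
        FreeAlgebra.ι K (⟨(l.1, g.1.2.1, g.1.1), by
          have h1 := g.2; have h2 := l.2; dsimp only
          simp only [Finset.mem_erase, Finset.mem_Ioo, Finset.mem_Icc] at h1 h2 ⊢
          omega⟩ : B2Idx n))) +
  (if h : g.1.1 < g.1.2.2 ∧ g.1.2.2 < g.1.2.1 then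
      ∑ l ∈ (((Finset.Icc 1 n).erase g.1.1).erase g.1.2.2).attach,
        FreeAlgebra.ι K (⟨(g.1.1, g.1.2.2, l.1), by
            have h1 := g.2; have h2 := l.2; dsimp only
            simp only [Finset.mem_erase, Finset.mem_Icc] at h1 h2 ⊢
            omega⟩ : B2Idx n) *
        FreeAlgebra.ι K (⟨(g.1.2.2, g.1.2.1, g.1.1), by
            have h1 := g.2; dsimp only
            simp only [Finset.mem_Icc] at h1 ⊢
            omega⟩ : B2Idx n)
    else 0)

/-- The degree-`d` homogeneous component of `B_n^(2)`. -/
def W (d : ℕ) : Submodule K (B2Alg K n) :=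
  Submodule.span K
    {x | ∃ w : List (B2Idx n), w.length = d ∧ x = mkB K n ((w.map (FreeAlgebra.ι K)).prod)}

/-- The image of the generator `r_{12}^3` in `B_3^(2)`. -/
def r12 : B2Alg K 3 := mkB K 3 (FreeAlgebra.ι K (⟨(1, 2, 3), by decide⟩ : B2Idx 3))

/-- The image of the generator `r_{13}^2` in `B_3^(2)`. -/
def r13 : B2Alg K 3 := mkB K 3 (FreeAlgebra.ι K (⟨(1, 3, 2), by decide⟩ : B2Idx 3))

/-- The image of the generator `r_{23}^1` in `B_3^(2)`. -/
def r23 : B2Alg K 3 := mkB K 3 (FreeAlgebra.ι K (⟨(2, 3, 1), by decide⟩ : B2Idx 3))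

/-- The claimed basis `1, r_{12}^3, r_{13}^2, r_{23}^1, r_{12}^3 r_{23}^1` of `B_3^(2)`. -/
def basisFam : Fin 5 → B2Alg K 3 :=
  ![1, r12 K, r13 K, r23 K, r12 K * r23 K]

namespace St10aux

def ga : B2Idx 3 := ⟨(1,2,3), by decide⟩
def gb : B2Idx 3 := ⟨(1,3,2), by decide⟩
def gc : B2Idx 3 := ⟨(2,3,1), by decide⟩

lemma classify (g : B2Idx 3) : g = ga ∨ g = gb ∨ g = gc := by
  obtain ⟨⟨i,j,m⟩, h⟩ := g
  simp only [Finset.mem_Icc] at h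
  obtain ⟨h1,h2,h3,h4,h5,h6⟩ := h
  have : (i,j,m) = (1,2,3) ∨ (i,j,m) = (1,3,2) ∨ (i,j,m) = (2,3,1) := by
    simp only [Prod.ext_iff]; omega
  rcases this with h'|h'|h'
  · exact Or.inl (Subtype.ext h')
  · exact Or.inr (Or.inl (Subtype.ext h'))
  · exact Or.inr (Or.inr (Subtype.ext h'))



lemma relzero (g1 g2 : B2Idx 3)
    (h : ¬(g2.1.1 = g1.1.2.1 ∧ (g2.1.2.2 = g1.1.2.2 ∨ g2.1.2.2 = g1.1.1))) :
    mkB K 3 (FreeAlgebra.ι K g1 * FreeAlgebra.ι K g2) = 0 := by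
  have := RingQuot.mkAlgHom_rel K (s := b2Rel K 3)
    (x := FreeAlgebra.ι K g1 * FreeAlgebra.ι K g2) (y := 0) ⟨⟨g1, g2, h, rfl⟩, rfl⟩
  rw [map_zero] at this
  exact this

section Rep
variable (K : Type) [Field K]

def E (i j : Fin 4) : Matrix (Fin 4) (Fin 4) K := Matrix.single i j 1

def fmat : B2Idx 3 → Matrix (Fin 4) (Fin 4) K := fun g =>
  if g.1 = (1,2,3) then E K 0 1 else if g.1 = (1,3,2) then E K 0 3 else E K 1 2

lemma fmat_ga : fmat K ga = E K 0 1 := by simp [fmat, ga]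
lemma fmat_gb : fmat K gb = E K 0 3 := by simp [fmat, gb]
lemma fmat_gc : fmat K gc = E K 1 2 := by simp [fmat, gc]

lemma phi_rel : ∀ a b, b2Rel K 3 a b →
    (FreeAlgebra.lift K (fmat K)) a = (FreeAlgebra.lift K (fmat K)) b := by
  rintro a b ⟨⟨g1, g2, h, rfl⟩, rfl⟩
  rw [map_zero, map_mul, FreeAlgebra.lift_ι_apply, FreeAlgebra.lift_ι_apply]
  rcases classify g1 with h1|h1|h1 <;> rcases classify g2 with h2|h2|h2 <;>
    subst h1 h2 <;>
    first
      | (exact absurd (by decide) h)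
      | (simp only [fmat_ga, fmat_gb, fmat_gc, E];
         refine Matrix.single_mul_single_of_ne _ _ _ _ ?_ 1; decide)

def phi : B2Alg K 3 →ₐ[K] Matrix (Fin 4) (Fin 4) K :=
  RingQuot.liftAlgHom K ⟨FreeAlgebra.lift K (fmat K), phi_rel K⟩

lemma phi_mkB (x) : phi K (mkB K 3 x) = FreeAlgebra.lift K (fmat K) x :=
  RingQuot.liftAlgHom_mkAlgHom_apply _ _ _ _

end Rep


section Delta
variable (K : Type) [Field K]

lemma delta_ga : delta K 3 ga = 0 := by
  rw [delta, dif_neg (by decide), Finset.attach_eq_empty_iff.mpr (by decide),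
    Finset.sum_empty, neg_zero, add_zero]

lemma delta_gc : delta K 3 gc = 0 := by
  rw [delta, dif_neg (by decide), Finset.attach_eq_empty_iff.mpr (by decide),
    Finset.sum_empty, neg_zero, add_zero]

lemma delta_gb : delta K 3 gb = FreeAlgebra.ι K ga * FreeAlgebra.ι K gc := by
  rw [delta, dif_pos (by decide), Finset.attach_eq_empty_iff.mpr (by decide),
    Finset.sum_empty, neg_zero, zero_add]
  rw [Finset.sum_eq_single_of_mem
      (⟨3, by decide⟩ : {x // x ∈ ((Finset.Icc 1 3).erase gb.1.1).erase gb.1.2.2})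
      (Finset.mem_attach _ _)]
  · rfl
  · rintro ⟨l, hl⟩ - hne
    exfalso
    rw [Finset.mem_erase, Finset.mem_erase, Finset.mem_Icc] at hl
    simp only [gb] at hl
    apply hne
    have : l = 3 := by omega
    subst this; rfl

end Delta

section Alg
variable (K : Type) [Field K]

lemma r12_eq : r12 K = mkB K 3 (FreeAlgebra.ι K ga) := rfl
lemma r13_eq : r13 K = mkB K 3 (FreeAlgebra.ι K gb) := rfl
lemma r23_eq : r23 K = mkB K 3 (FreeAlgebra.ι K gc) := rfl

lemma mk_mul (g1 g2 : B2Idx 3) :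
    mkB K 3 (FreeAlgebra.ι K g1) * mkB K 3 (FreeAlgebra.ι K g2) =
      mkB K 3 (FreeAlgebra.ι K g1 * FreeAlgebra.ι K g2) := (map_mul _ _ _).symm

lemma prod_cases (g1 g2 : B2Idx 3) :
    mkB K 3 (FreeAlgebra.ι K g1) * mkB K 3 (FreeAlgebra.ι K g2) = 0 ∨
      (g1 = ga ∧ g2 = gc) := by
  rcases classify g1 with h1|h1|h1 <;> rcases classify g2 with h2|h2|h2 <;> subst h1 h2 <;>
    first
      | (right; exact ⟨rfl, rfl⟩)
      | (left; rw [mk_mul]; exact relzero K _ _ (by decide))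

lemma phi_r12 : phi K (r12 K) = E K 0 1 := by
  rw [r12_eq, phi_mkB, FreeAlgebra.lift_ι_apply, fmat_ga]
lemma phi_r13 : phi K (r13 K) = E K 0 3 := by
  rw [r13_eq, phi_mkB, FreeAlgebra.lift_ι_apply, fmat_gb]
lemma phi_r23 : phi K (r23 K) = E K 1 2 := by
  rw [r23_eq, phi_mkB, FreeAlgebra.lift_ι_apply, fmat_gc]
lemma phi_p : phi K (r12 K * r23 K) = E K 0 2 := by
  rw [map_mul, phi_r12, phi_r23, E, E, E, Matrix.single_mul_single_same, one_mul]

instance : Nontrivial (B2Alg K 3) := by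
  refine ⟨1, 0, fun h => ?_⟩
  have := congrArg (phi K) h
  rw [map_one, map_zero] at this
  exact one_ne_zero this

lemma p_ne : r12 K * r23 K ≠ 0 := by
  intro h
  have := congrArg (phi K) h
  rw [phi_p, map_zero] at this
  have := congrFun (congrFun this 0) 2
  simp [E, Matrix.single] at this

lemma matind : LinearIndependent K ![(1 : Matrix (Fin 4) (Fin 4) K),
    E K 0 1, E K 0 3, E K 1 2, E K 0 2] := by
  rw [Fintype.linearIndependent_iff]
  intro g h
  have k00 := congrFun (congrFun h 0) 0
  have k01 := congrFun (congrFun h 0) 1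
  have k03 := congrFun (congrFun h 0) 3
  have k12 := congrFun (congrFun h 1) 2
  have k02 := congrFun (congrFun h 0) 2
  simp [Fin.sum_univ_five, E, Matrix.single, Matrix.one_apply,
    Matrix.sum_apply, Matrix.add_apply, Matrix.smul_apply] at k00 k01 k03 k12 k02
  intro i
  fin_cases i <;> simp_all

lemma basis_indep : LinearIndependent K (basisFam K) := by
  apply LinearIndependent.of_comp (phi K).toLinearMap
  have : (phi K).toLinearMap ∘ basisFam K = ![(1 : Matrix (Fin 4) (Fin 4) K),
      E K 0 1, E K 0 3, E K 1 2, E K 0 2] := by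
    funext i
    fin_cases i <;>
      simp [basisFam, phi_r12, phi_r13, phi_r23, phi_p, map_one]
  rw [this]
  exact matind K

end Alg

section Span
variable (K : Type) [Field K]

def S : Submodule K (B2Alg K 3) := Submodule.span K (Set.range (basisFam K))

lemma mem_S (i : Fin 5) : basisFam K i ∈ S K := Submodule.subset_span ⟨i, rfl⟩

lemma z_aa : r12 K * r12 K = 0 := by
  rw [r12_eq, mk_mul]; exact relzero K _ _ (by decide)
lemma z_ab : r12 K * r13 K = 0 := by
  rw [r12_eq, r13_eq, mk_mul]; exact relzero K _ _ (by decide)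
lemma z_ba : r13 K * r12 K = 0 := by
  rw [r12_eq, r13_eq, mk_mul]; exact relzero K _ _ (by decide)
lemma z_bb : r13 K * r13 K = 0 := by
  rw [r13_eq, mk_mul]; exact relzero K _ _ (by decide)
lemma z_bc : r13 K * r23 K = 0 := by
  rw [r13_eq, r23_eq, mk_mul]; exact relzero K _ _ (by decide)
lemma z_ca : r23 K * r12 K = 0 := by
  rw [r12_eq, r23_eq, mk_mul]; exact relzero K _ _ (by decide)
lemma z_cb : r23 K * r13 K = 0 := by
  rw [r13_eq, r23_eq, mk_mul]; exact relzero K _ _ (by decide)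
lemma z_cc : r23 K * r23 K = 0 := by
  rw [r23_eq, mk_mul]; exact relzero K _ _ (by decide)

lemma z_aa' (x : B2Alg K 3) : r12 K * (r12 K * x) = 0 := by rw [← mul_assoc, z_aa, zero_mul]
lemma z_ab' (x : B2Alg K 3) : r12 K * (r13 K * x) = 0 := by rw [← mul_assoc, z_ab, zero_mul]
lemma z_ba' (x : B2Alg K 3) : r13 K * (r12 K * x) = 0 := by rw [← mul_assoc, z_ba, zero_mul]
lemma z_bb' (x : B2Alg K 3) : r13 K * (r13 K * x) = 0 := by rw [← mul_assoc, z_bb, zero_mul]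
lemma z_bc' (x : B2Alg K 3) : r13 K * (r23 K * x) = 0 := by rw [← mul_assoc, z_bc, zero_mul]
lemma z_ca' (x : B2Alg K 3) : r23 K * (r12 K * x) = 0 := by rw [← mul_assoc, z_ca, zero_mul]
lemma z_cb' (x : B2Alg K 3) : r23 K * (r13 K * x) = 0 := by rw [← mul_assoc, z_cb, zero_mul]
lemma z_cc' (x : B2Alg K 3) : r23 K * (r23 K * x) = 0 := by rw [← mul_assoc, z_cc, zero_mul]

lemma basis_mul (i j : Fin 5) : basisFam K i * basisFam K j ∈ S K := by
  fin_cases i <;> fin_cases j <;>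
    simp [basisFam, one_mul, mul_one, mul_assoc,
      z_aa, z_ab, z_ba, z_bb, z_bc, z_ca, z_cb, z_cc,
      z_aa', z_ab', z_ba', z_bb', z_bc', z_ca', z_cb', z_cc',
      mul_zero, zero_mul] <;>
    first
      | exact Submodule.zero_mem _
      | exact mem_S K 0
      | exact mem_S K 1
      | exact mem_S K 2
      | exact mem_S K 3
      | exact mem_S K 4

lemma S_mul : ∀ x ∈ S K, ∀ y ∈ S K, x * y ∈ S K := by
  intro x hx
  induction hx using Submodule.span_induction with
  | mem u hu =>
    obtain ⟨i, rfl⟩ := hu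
    intro y hy
    induction hy using Submodule.span_induction with
    | mem v hv => obtain ⟨j, rfl⟩ := hv; exact basis_mul K i j
    | zero => rw [mul_zero]; exact Submodule.zero_mem _
    | add a b _ _ ha hb => rw [mul_add]; exact Submodule.add_mem _ ha hb
    | smul r a _ ha => rw [mul_smul_comm]; exact Submodule.smul_mem _ _ ha
  | zero => intro y hy; rw [zero_mul]; exact Submodule.zero_mem _
  | add a b _ _ ha hb => intro y hy; rw [add_mul]; exact Submodule.add_mem _ (ha y hy) (hb y hy)
  | smul r a _ ha => intro y hy; rw [smul_mul_assoc]; exact Submodule.smul_mem _ _ (ha y hy)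

def SAlg : Subalgebra K (B2Alg K 3) :=
  (S K).toSubalgebra (mem_S K 0) (fun x y hx hy => S_mul K x hx y hy)

lemma S_eq_top : S K = ⊤ := by
  rw [eq_top_iff]
  intro x _
  obtain ⟨y, rfl⟩ := RingQuot.mkAlgHom_surjective K (b2Rel K 3) x
  have hy : y ∈ Algebra.adjoin K (Set.range (FreeAlgebra.ι K)) := by
    rw [FreeAlgebra.adjoin_range_ι]; trivial
  have h3 : mkB K 3 y ∈ (Algebra.adjoin K (Set.range (FreeAlgebra.ι K))).map (mkB K 3) :=
    ⟨y, hy, rfl⟩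
  rw [AlgHom.map_adjoin] at h3
  have h2 : Algebra.adjoin K (⇑(mkB K 3) '' Set.range (FreeAlgebra.ι K)) ≤ SAlg K := by
    apply Algebra.adjoin_le
    rintro z ⟨w, ⟨g, rfl⟩, rfl⟩
    rcases classify g with h|h|h <;> subst h
    · exact mem_S K 1
    · exact mem_S K 2
    · exact mem_S K 3
  exact h2 h3

def bas : Module.Basis (Fin 5) K (B2Alg K 3) := Module.Basis.mk (basis_indep K) (by exact (S_eq_top K).ge)

lemma bas_apply (i : Fin 5) : bas K i = basisFam K i := Module.Basis.mk_apply _ _ _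

instance : FiniteDimensional K (B2Alg K 3) := Module.Finite.of_basis (bas K)

lemma finrank_B : Module.finrank K (B2Alg K 3) = 5 := by
  rw [Module.finrank_eq_card_basis (bas K), Fintype.card_fin]

end Span

section Diff
variable {K : Type} [Field K]
variable {D : FreeAlgebra K (B2Idx 3) →ₗ[K] FreeAlgebra K (B2Idx 3)}
variable {dB : B2Alg K 3 →ₗ[K] B2Alg K 3}

def HD (D : FreeAlgebra K (B2Idx 3) →ₗ[K] FreeAlgebra K (B2Idx 3)) : Prop :=
  ∀ w : List (B2Idx 3),
      D ((w.map (FreeAlgebra.ι K)).prod) =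
        ∑ t : Fin w.length, ((-1 : K) ^ (t : ℕ)) •
          (((w.take t).map (FreeAlgebra.ι K)).prod * delta K 3 (w.get t) *
            ((w.drop (t + 1)).map (FreeAlgebra.ι K)).prod)

lemma D_one (hD : HD D) : D 1 = 0 := by simpa using hD []

lemma D_single (hD : HD D) (g : B2Idx 3) : D (FreeAlgebra.ι K g) = delta K 3 g := by
  simpa using hD [g]

lemma dB_one (hD : HD D) (hdB : ∀ x, dB (mkB K 3 x) = mkB K 3 (D x)) :
    dB (1 : B2Alg K 3) = 0 := by
  rw [← map_one (mkB K 3), hdB, D_one hD, map_zero]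

lemma dB_r12 (hD : HD D) (hdB : ∀ x, dB (mkB K 3 x) = mkB K 3 (D x)) :
    dB (r12 K) = 0 := by
  rw [r12_eq, hdB, D_single hD, delta_ga, map_zero]

lemma dB_r23 (hD : HD D) (hdB : ∀ x, dB (mkB K 3 x) = mkB K 3 (D x)) :
    dB (r23 K) = 0 := by
  rw [r23_eq, hdB, D_single hD, delta_gc, map_zero]

lemma dB_r13 (hD : HD D) (hdB : ∀ x, dB (mkB K 3 x) = mkB K 3 (D x)) :
    dB (r13 K) = r12 K * r23 K := by
  rw [r13_eq, hdB, D_single hD, delta_gb, map_mul, ← r12_eq, ← r23_eq]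

lemma dB_p (hD : HD D) (hdB : ∀ x, dB (mkB K 3 x) = mkB K 3 (D x)) :
    dB (r12 K * r23 K) = 0 := by
  rw [r12_eq, r23_eq, mk_mul, hdB]
  rw [show FreeAlgebra.ι K ga * FreeAlgebra.ι K gc =
    (([ga, gc].map (FreeAlgebra.ι K)).prod) by simp]
  rw [hD [ga, gc]]
  simp [Fin.sum_univ_two, delta_ga, delta_gc]


lemma bf0 : basisFam K 0 = 1 := rfl
lemma bf1 : basisFam K 1 = r12 K := rfl
lemma bf2 : basisFam K 2 = r13 K := rfl
lemma bf3 : basisFam K 3 = r23 K := rfl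
lemma bf4 : basisFam K 4 = r12 K * r23 K := rfl

lemma ker_eq (hD : HD D) (hdB : ∀ x, dB (mkB K 3 x) = mkB K 3 (D x)) :
    LinearMap.ker dB = Submodule.span K {(1 : B2Alg K 3), r12 K, r23 K, r12 K * r23 K} := by
  apply le_antisymm
  · intro x hx
    rw [LinearMap.mem_ker] at hx
    have hrep := (bas K).sum_repr x
    set c := ((bas K).repr x : Fin 5 →₀ K) with hc
    rw [← hrep] at hx ⊢
    rw [map_sum] at hx
    simp only [map_smul, bas_apply, Fin.sum_univ_five, bf0, bf1, bf2, bf3, bf4,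
      dB_one hD hdB, dB_r12 hD hdB, dB_r13 hD hdB, dB_r23 hD hdB, dB_p hD hdB,
      smul_zero, zero_add, add_zero] at hx
    have hc2 : c 2 = 0 := by
      rcases smul_eq_zero.mp hx with h | h
      · exact h
      · exact absurd h (p_ne K)
    simp only [bas_apply, Fin.sum_univ_five, bf0, bf1, bf2, bf3, bf4, hc2, zero_smul,
      add_zero]
    refine Submodule.add_mem _ (Submodule.add_mem _ (Submodule.add_mem _ ?_ ?_) ?_) ?_ <;>
      exact Submodule.smul_mem _ _ (Submodule.subset_span (by simp))
  · rw [Submodule.span_le]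
    rintro x hx
    simp only [Set.mem_insert_iff, Set.mem_singleton_iff] at hx
    rcases hx with rfl | rfl | rfl | rfl <;>
      rw [SetLike.mem_coe, LinearMap.mem_ker]
    · exact dB_one hD hdB
    · exact dB_r12 hD hdB
    · exact dB_r23 hD hdB
    · exact dB_p hD hdB

lemma range_eq (hD : HD D) (hdB : ∀ x, dB (mkB K 3 x) = mkB K 3 (D x)) :
    LinearMap.range dB = Submodule.span K {r12 K * r23 K} := by
  apply le_antisymm
  · rintro _ ⟨x, rfl⟩
    rw [← (bas K).sum_repr x, map_sum]
    simp only [map_smul, bas_apply, Fin.sum_univ_five, bf0, bf1, bf2, bf3, bf4,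
      dB_one hD hdB, dB_r12 hD hdB, dB_r13 hD hdB, dB_r23 hD hdB, dB_p hD hdB,
      smul_zero, zero_add, add_zero]
    exact Submodule.smul_mem _ _ (Submodule.subset_span rfl)
  · rw [Submodule.span_le, Set.singleton_subset_iff]
    exact ⟨r13 K, dB_r13 hD hdB⟩

lemma W0_eq : W K 3 0 = Submodule.span K {(1 : B2Alg K 3)} := by
  apply le_antisymm
  · rw [W, Submodule.span_le]
    rintro x ⟨w, hw, rfl⟩
    have : w = [] := List.length_eq_zero_iff.mp hw
    subst this
    simp only [List.map_nil, List.prod_nil, map_one]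
    exact Submodule.subset_span rfl
  · rw [Submodule.span_le, Set.singleton_subset_iff, W]
    exact SetLike.mem_coe.mpr (Submodule.subset_span ⟨[], rfl, by simp⟩)

lemma W1_eq : W K 3 1 = Submodule.span K {r12 K, r13 K, r23 K} := by
  apply le_antisymm
  · rw [W, Submodule.span_le]
    rintro x ⟨w, hw, rfl⟩
    obtain ⟨g, rfl⟩ := List.length_eq_one_iff.mp hw
    simp only [List.map_cons, List.map_nil, List.prod_cons, List.prod_nil, mul_one]
    rcases classify g with rfl | rfl | rfl <;>
      exact Submodule.subset_span (by simp [r12_eq, r13_eq, r23_eq])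
  · rw [Submodule.span_le, W]
    rintro x hx
    simp only [Set.mem_insert_iff, Set.mem_singleton_iff] at hx
    rcases hx with rfl | rfl | rfl
    · exact SetLike.mem_coe.mpr (Submodule.subset_span ⟨[ga], rfl, by simp [r12_eq]⟩)
    · exact SetLike.mem_coe.mpr (Submodule.subset_span ⟨[gb], rfl, by simp [r13_eq]⟩)
    · exact SetLike.mem_coe.mpr (Submodule.subset_span ⟨[gc], rfl, by simp [r23_eq]⟩)

lemma W2_eq : W K 3 2 = Submodule.span K {r12 K * r23 K} := by
  apply le_antisymm
  · rw [W, Submodule.span_le]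
    rintro x ⟨w, hw, rfl⟩
    obtain ⟨g1, g2, rfl⟩ := List.length_eq_two.mp hw
    simp only [List.map_cons, List.map_nil, List.prod_cons, List.prod_nil, mul_one, map_mul]
    rcases prod_cases K g1 g2 with h | ⟨rfl, rfl⟩
    · rw [h]; exact Submodule.zero_mem _
    · exact Submodule.subset_span (by rw [Set.mem_singleton_iff, r12_eq, r23_eq])
  · rw [Submodule.span_le, Set.singleton_subset_iff, W]
    exact SetLike.mem_coe.mpr
      (Submodule.subset_span ⟨[ga, gc], rfl, by rw [r12_eq, r23_eq, mk_mul]; simp⟩)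

lemma indep2 : LinearIndependent K ![r12 K, r23 K] := by
  have h := (basis_indep K).comp ![1, 3] (by decide)
  have e : basisFam K ∘ ![1, 3] = ![r12 K, r23 K] := by
    funext i; fin_cases i <;> rfl
  rwa [e] at h

lemma kerW1 (hD : HD D) (hdB : ∀ x, dB (mkB K 3 x) = mkB K 3 (D x)) :
    LinearMap.ker dB ⊓ W K 3 1 = Submodule.span K {r12 K, r23 K} := by
  apply le_antisymm
  · rintro x hx
    rw [Submodule.mem_inf, LinearMap.mem_ker, W1_eq] at hx
    obtain ⟨hk, hw⟩ := hx
    have hset : ({r12 K, r13 K, r23 K} : Set (B2Alg K 3)) =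
        Set.range ![r12 K, r13 K, r23 K] := by
      ext y
      simp only [Set.mem_insert_iff, Set.mem_singleton_iff, Set.mem_range]
      constructor
      · rintro (rfl | rfl | rfl)
        exacts [⟨0, rfl⟩, ⟨1, rfl⟩, ⟨2, rfl⟩]
      · rintro ⟨i, rfl⟩
        fin_cases i
        · exact Or.inl rfl
        · exact Or.inr (Or.inl rfl)
        · exact Or.inr (Or.inr rfl)
    rw [hset, Submodule.mem_span_range_iff_exists_fun] at hw
    obtain ⟨c, rfl⟩ := hw
    rw [map_sum] at hk
    simp only [map_smul, Fin.sum_univ_three, Matrix.cons_val_zero, Matrix.cons_val_one,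
      Matrix.head_cons, Matrix.cons_val_two, Matrix.tail_cons,
      dB_r12 hD hdB, dB_r13 hD hdB, dB_r23 hD hdB,
      smul_zero, zero_add, add_zero] at hk
    have hc1 : c 1 = 0 := by
      rcases smul_eq_zero.mp hk with h | h
      · exact h
      · exact absurd h (p_ne K)
    simp only [Fin.sum_univ_three, Matrix.cons_val_zero, Matrix.cons_val_one,
      Matrix.head_cons, Matrix.cons_val_two, Matrix.tail_cons, hc1, zero_smul, add_zero,
      zero_add]
    exact Submodule.add_mem _
      (Submodule.smul_mem _ _ (Submodule.subset_span (by simp)))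
      (Submodule.smul_mem _ _ (Submodule.subset_span (by simp)))
  · rw [Submodule.span_le]
    rintro x hx
    simp only [Set.mem_insert_iff, Set.mem_singleton_iff] at hx
    rcases hx with rfl | rfl
    · exact ⟨LinearMap.mem_ker.mpr (dB_r12 hD hdB),
        (W1_eq (K := K)) ▸ Submodule.subset_span (by simp)⟩
    · exact ⟨LinearMap.mem_ker.mpr (dB_r23 hD hdB),
        (W1_eq (K := K)) ▸ Submodule.subset_span (by simp)⟩

end Diff
end St10aux

/-- `B_3^(2)` is 5-dimensional with basis
`1, r_{12}^3, r_{13}^2, r_{23}^1, r_{12}^3 r_{23}^1`; the differential `d_B` kills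
`r_{12}^3`, `r_{23}^1` and `r_{12}^3 r_{23}^1` and sends `r_{13}^2` to `r_{12}^3 r_{23}^1`;
its kernel is the span of `1, r_{12}^3, r_{23}^1, r_{12}^3 r_{23}^1` (dimension 4) and its
range is the span of `r_{12}^3 r_{23}^1` (dimension 1); the homology has dimensions
`1, 2, 0` in degrees `0, 1, 2`. -/
theorem statement10
    (D : FreeAlgebra K (B2Idx 3) →ₗ[K] FreeAlgebra K (B2Idx 3))
    (hD : ∀ w : List (B2Idx 3),
      D ((w.map (FreeAlgebra.ι K)).prod) =
        ∑ t : Fin w.length, ((-1 : K) ^ (t : ℕ)) •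
          (((w.take t).map (FreeAlgebra.ι K)).prod * delta K 3 (w.get t) *
            ((w.drop (t + 1)).map (FreeAlgebra.ι K)).prod))
    (dB : B2Alg K 3 →ₗ[K] B2Alg K 3)
    (hdB : ∀ x, dB (mkB K 3 x) = mkB K 3 (D x)) :
    (LinearIndependent K (basisFam K) ∧
      Submodule.span K (Set.range (basisFam K)) = ⊤ ∧
      Module.finrank K (B2Alg K 3) = 5) ∧
    (dB (r12 K) = 0 ∧ dB (r23 K) = 0 ∧ dB (r13 K) = r12 K * r23 K ∧
      dB (r12 K * r23 K) = 0) ∧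
    (LinearMap.ker dB =
        Submodule.span K {(1 : B2Alg K 3), r12 K, r23 K, r12 K * r23 K} ∧
      Module.finrank K ↥(LinearMap.ker dB) = 4) ∧
    (LinearMap.range dB = Submodule.span K {r12 K * r23 K} ∧
      Module.finrank K ↥(LinearMap.range dB) = 1) ∧
    (Module.finrank K ↥(LinearMap.ker dB ⊓ W K 3 0) = 1 ∧
      Module.finrank K
        (@HasQuotient.Quotient ↥(LinearMap.ker dB ⊓ W K 3 1) _ Submodule.hasQuotient
          (Submodule.comap (LinearMap.ker dB ⊓ W K 3 1).subtype
            (Submodule.map dB (W K 3 0)))) = 2 ∧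
      Module.finrank K
        (@HasQuotient.Quotient ↥(LinearMap.ker dB ⊓ W K 3 2) _ Submodule.hasQuotient
          (Submodule.comap (LinearMap.ker dB ⊓ W K 3 2).subtype
            (Submodule.map dB (W K 3 1)))) = 0) := by
  classical
  have hD' : St10aux.HD D := hD
  have hrange : LinearMap.range dB = Submodule.span K {r12 K * r23 K} :=
    St10aux.range_eq hD' hdB
  have hfr : Module.finrank K ↥(LinearMap.range dB) = 1 := by
    rw [hrange]
    exact finrank_span_singleton (St10aux.p_ne K)
  have hfk : Module.finrank K ↥(LinearMap.ker dB) = 4 := by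
    have h := LinearMap.finrank_range_add_finrank_ker dB
    rw [St10aux.finrank_B K, hfr] at h
    omega
  refine ⟨⟨St10aux.basis_indep K, St10aux.S_eq_top K, St10aux.finrank_B K⟩,
    ⟨St10aux.dB_r12 hD' hdB, St10aux.dB_r23 hD' hdB, St10aux.dB_r13 hD' hdB,
      St10aux.dB_p hD' hdB⟩,
    ⟨St10aux.ker_eq hD' hdB, hfk⟩, ⟨hrange, hfr⟩, ?_, ?_, ?_⟩
  · -- degree 0
    have h0 : LinearMap.ker dB ⊓ W K 3 0 = Submodule.span K {(1 : B2Alg K 3)} := by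
      rw [St10aux.W0_eq]
      refine inf_eq_right.mpr (Submodule.span_le.mpr ?_)
      rintro x hx
      rw [Set.mem_singleton_iff] at hx
      subst hx
      exact LinearMap.mem_ker.mpr (St10aux.dB_one hD' hdB)
    rw [h0]
    exact finrank_span_singleton one_ne_zero
  · -- degree 1
    rw [St10aux.kerW1 hD' hdB]
    have hm : Submodule.map dB (W K 3 0) = ⊥ := by
      rw [St10aux.W0_eq, Submodule.map_span, Set.image_singleton,
        St10aux.dB_one hD' hdB, Submodule.span_zero_singleton]
    rw [hm, Submodule.comap_bot, Submodule.ker_subtype]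
    erw [(Submodule.quotEquivOfEqBot _ rfl).finrank_eq]
    have hset : ({r12 K, r23 K} : Set (B2Alg K 3)) = Set.range ![r12 K, r23 K] := by
      ext y
      simp only [Set.mem_insert_iff, Set.mem_singleton_iff, Set.mem_range]
      constructor
      · rintro (rfl | rfl)
        exacts [⟨0, rfl⟩, ⟨1, rfl⟩]
      · rintro ⟨i, rfl⟩
        fin_cases i
        · exact Or.inl rfl
        · exact Or.inr rfl
    rw [hset, finrank_span_eq_card (St10aux.indep2 (K := K)), Fintype.card_fin]
  · -- degree 2
    have h2 : LinearMap.ker dB ⊓ W K 3 2 ≤ Submodule.map dB (W K 3 1) := by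
      refine le_trans inf_le_right ?_
      rw [St10aux.W2_eq, Submodule.span_le, Set.singleton_subset_iff]
      exact ⟨r13 K, (St10aux.W1_eq (K := K)) ▸ Submodule.subset_span (by simp),
        St10aux.dB_r13 hD' hdB⟩
    have htop := Submodule.comap_subtype_eq_top.mpr h2
    rw [htop]
    haveI : Subsingleton
        (@HasQuotient.Quotient ↥(LinearMap.ker dB ⊓ W K 3 2) _ Submodule.hasQuotient
          (⊤ : Submodule K ↥(LinearMap.ker dB ⊓ W K 3 2))) :=
      Submodule.Quotient.subsingleton_iff.mpr rfl
    exact Module.finrank_zero_of_subsingleton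

end
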